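/- Fix an integer d ≥ 4 and let I ⊆ ℚ[c₁,c₂,c₃] be the ideal generated by s₀, s₁, s₂ as in the nodal plane curve computation (s₀ = −2d(d−1)(d−2)(d−3)c₂ + 2d(d−1)²(d−2)c₁², s₁ = −2d(d−3)(d²−3d+3)c₃ + 2d(d−1)(2d²−8d+7)c₁c₂ − 2d(d−1)²(d−2)c₁³, s₂ = 2d(2d³−10d²+16d−9)c₁c₃ + 2d(d−1)²(d−2)c₁⁴ + 2d(d−1)(d−2)(d−3)c₂² − 2d(d−1)(3d²−11d+9)c₁²c₂). Then (d−3)²(d²−3d+3)c₃ − (d−1)²(d²−3d+1)c₁³ ∈ I, and also c₁c₃ ∈ I and c₁⁴ ∈ I. -/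
import Mathlib


noncomputable section

abbrev R3 : Type := MvPolynomial (Fin 3) ℚ

noncomputable def cc (i : Fin 3) : R3 := MvPolynomial.X i

noncomputable def s0 (d : ℕ) : R3 :=
  -2 * (d : R3) * ((d : R3) - 1) * ((d : R3) - 2) * ((d : R3) - 3) * cc 1
    + 2 * (d : R3) * ((d : R3) - 1) ^ 2 * ((d : R3) - 2) * cc 0 ^ 2

noncomputable def s1 (d : ℕ) : R3 :=
  -2 * (d : R3) * ((d : R3) - 3) * ((d : R3) ^ 2 - 3 * (d : R3) + 3) * cc 2
    + 2 * (d : R3) * ((d : R3) - 1) * (2 * (d : R3) ^ 2 - 8 * (d : R3) + 7) * (cc 0 * cc 1)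
    - 2 * (d : R3) * ((d : R3) - 1) ^ 2 * ((d : R3) - 2) * cc 0 ^ 3

noncomputable def s2 (d : ℕ) : R3 :=
  2 * (d : R3) * (2 * (d : R3) ^ 3 - 10 * (d : R3) ^ 2 + 16 * (d : R3) - 9) * (cc 0 * cc 2)
    + 2 * (d : R3) * ((d : R3) - 1) ^ 2 * ((d : R3) - 2) * cc 0 ^ 4
    + 2 * (d : R3) * ((d : R3) - 1) * ((d : R3) - 2) * ((d : R3) - 3) * cc 1 ^ 2
    - 2 * (d : R3) * ((d : R3) - 1) * (3 * (d : R3) ^ 2 - 11 * (d : R3) + 9) * (cc 0 ^ 2 * cc 1)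

noncomputable def Irel (d : ℕ) : Ideal R3 := Ideal.span {s0 d, s1 d, s2 d}

lemma cancelC {q : ℚ} (hq : q ≠ 0) {t : R3} {I : Ideal R3}
    (h : MvPolynomial.C q * t ∈ I) : t ∈ I := by
  have ht : t = MvPolynomial.C q⁻¹ * (MvPolynomial.C q * t) := by
    rw [← mul_assoc, ← MvPolynomial.C_mul, inv_mul_cancel₀ hq, MvPolynomial.C_1, one_mul]
  rw [ht]
  exact Ideal.mul_mem_left _ _ h

theorem stmt_7 (d : ℕ) (hd : 4 ≤ d) :
    ((d : R3) - 3) ^ 2 * ((d : R3) ^ 2 - 3 * (d : R3) + 3) * cc 2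
      - ((d : R3) - 1) ^ 2 * ((d : R3) ^ 2 - 3 * (d : R3) + 1) * cc 0 ^ 3 ∈ Irel d
    ∧ cc 0 * cc 2 ∈ Irel d ∧ cc 0 ^ 4 ∈ Irel d := by
  have hdq : (4 : ℚ) ≤ (d : ℚ) := by exact_mod_cast hd
  have hs0 : s0 d ∈ Irel d := Ideal.subset_span (by simp)
  have hs1 : s1 d ∈ Irel d := Ideal.subset_span (by simp)
  have hs2 : s2 d ∈ Irel d := Ideal.subset_span (by simp)
  -- cast helper: C (poly in (d:ℚ)) = same poly in (d:R3)
  have hC : ∀ q : ℚ, (MvPolynomial.C q : R3) = MvPolynomial.C q := fun _ => rfl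
  -- part 1
  have h1 : ((d : R3) - 3) ^ 2 * ((d : R3) ^ 2 - 3 * (d : R3) + 3) * cc 2
      - ((d : R3) - 1) ^ 2 * ((d : R3) ^ 2 - 3 * (d : R3) + 1) * cc 0 ^ 3 ∈ Irel d := by
    apply cancelC (q := 2 * (d : ℚ) * ((d : ℚ) - 2)) (ne_of_gt (by nlinarith))
    have key : MvPolynomial.C (2 * (d : ℚ) * ((d : ℚ) - 2)) *
        (((d : R3) - 3) ^ 2 * ((d : R3) ^ 2 - 3 * (d : R3) + 3) * cc 2
          - ((d : R3) - 1) ^ 2 * ((d : R3) ^ 2 - 3 * (d : R3) + 1) * cc 0 ^ 3)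
        = (-(((d : R3) - 3) * ((d : R3) - 2))) * s1 d
          + (-(2 * (d : R3) ^ 2 - 8 * (d : R3) + 7) * cc 0) * s0 d := by
      simp only [map_mul, map_sub, map_ofNat, map_natCast, s0, s1]
      ring
    rw [key]
    exact add_mem (Ideal.mul_mem_left _ _ hs1) (Ideal.mul_mem_left _ _ hs0)
  -- part 2
  have h2 : cc 0 * cc 2 ∈ Irel d := by
    apply cancelC (q := 2 * (d : ℚ) ^ 2 * ((d : ℚ) - 2) ^ 2) (ne_of_gt (by nlinarith))
    have key : MvPolynomial.C (2 * (d : ℚ) ^ 2 * ((d : ℚ) - 2) ^ 2) * (cc 0 * cc 2)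
        = 1 * s2 d + cc 1 * s0 d + cc 0 * s1 d := by
      simp only [map_mul, map_sub, map_pow, map_ofNat, map_natCast, s0, s1, s2]
      ring
    rw [key]
    exact add_mem (add_mem (Ideal.mul_mem_left _ _ hs2) (Ideal.mul_mem_left _ _ hs0))
      (Ideal.mul_mem_left _ _ hs1)
  -- part 3
  have h3 : cc 0 ^ 4 ∈ Irel d := by
    have hpos : (0:ℚ) < ((d : ℚ) - 1) ^ 2 * ((d : ℚ) ^ 2 - 3 * (d : ℚ) + 1) := by
      have h1 : (0:ℚ) < ((d : ℚ) - 1) ^ 2 := by nlinarith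
      have h2 : (0:ℚ) < (d : ℚ) ^ 2 - 3 * (d : ℚ) + 1 := by nlinarith
      positivity
    apply cancelC (q := ((d : ℚ) - 1) ^ 2 * ((d : ℚ) ^ 2 - 3 * (d : ℚ) + 1)) (ne_of_gt hpos)
    have key : MvPolynomial.C (((d : ℚ) - 1) ^ 2 * ((d : ℚ) ^ 2 - 3 * (d : ℚ) + 1)) * cc 0 ^ 4
        = ((d : R3) - 3) ^ 2 * ((d : R3) ^ 2 - 3 * (d : R3) + 3) * (cc 0 * cc 2)
          - cc 0 * (((d : R3) - 3) ^ 2 * ((d : R3) ^ 2 - 3 * (d : R3) + 3) * cc 2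
            - ((d : R3) - 1) ^ 2 * ((d : R3) ^ 2 - 3 * (d : R3) + 1) * cc 0 ^ 3) := by
      simp only [map_mul, map_sub, map_add, map_pow, map_one, map_ofNat, map_natCast]
      ring
    rw [key]
    exact sub_mem (Ideal.mul_mem_left _ _ h2) (Ideal.mul_mem_left _ _ h1)
  exact ⟨h1, h2, h3⟩
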